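/- Let G be the DAG of matrix-vector multiplication y = A·x for an m×m matrix A and vector x of length m: sources are the m² entries A_{j,i} and the m entries x_i; for each pair (j,i) there is an intermediate node p_{j,i} with in-edges from A_{j,i} and x_i; and for each j there is a sink node y_j with in-edges from p_{j,1}, …, p_{j,m}. If m ≥ 3 and m+3 ≤ r ≤ 2m, then OPT_PRBP(G,r) = m² + 2m (the trivial cost) while OPT_RBP(G,r) ≥ m² + 3m − 1; in particular OPT_PRBP(G,r) < OPT_RBP(G,r). -/

import Mathlib

open scoped Classical

/-! ### Directed graphs / DAGs -/

structure DirGraph (V : Type) where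
  E : V → V → Prop

namespace DirGraph

variable {V : Type}

def Acyclic (G : DirGraph V) : Prop := ∀ v, ¬ Relation.TransGen G.E v v

def IsSource (G : DirGraph V) (v : V) : Prop := ∀ u, ¬ G.E u v

def IsSink (G : DirGraph V) (v : V) : Prop := ∀ u, ¬ G.E v u

def NoIsolated (G : DirGraph V) : Prop := ∀ v, (∃ u, G.E u v) ∨ (∃ u, G.E v u)

noncomputable def inDeg (G : DirGraph V) (v : V) : ℕ := {u | G.E u v}.ncard

noncomputable def outDeg (G : DirGraph V) (v : V) : ℕ := {u | G.E v u}.ncard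

noncomputable def maxInDeg (G : DirGraph V) [Fintype V] : ℕ :=
  Finset.univ.sup G.inDeg

noncomputable def maxOutDeg (G : DirGraph V) [Fintype V] : ℕ :=
  Finset.univ.sup G.outDeg

end DirGraph

/-! ### The (one-shot) red-blue pebble game (RBP) -/

structure RBPState (V : Type) where
  red : Finset V
  blue : Finset V
  computed : Finset V

inductive RBPMove (V : Type) where
  | save : V → RBPMove V
  | load : V → RBPMove V
  | compute : V → RBPMove V
  | delete : V → RBPMove V

def RBPMove.ioCost {V : Type} : RBPMove V → ℕ
  | .save _ => 1
  | .load _ => 1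
  | _ => 0

variable {V : Type} [Fintype V] [DecidableEq V]

def RBPStep (G : DirGraph V) (r : ℕ) (s : RBPState V) :
    RBPMove V → RBPState V → Prop
  | .save v, t => v ∈ s.red ∧ t = { s with blue := insert v s.blue }
  | .load v, t => v ∈ s.blue ∧ (insert v s.red).card ≤ r ∧
      t = { s with red := insert v s.red }
  | .compute v, t => ¬ G.IsSource v ∧ v ∉ s.computed ∧
      (∀ u, G.E u v → u ∈ s.red) ∧ (insert v s.red).card ≤ r ∧
      t = { s with red := insert v s.red, computed := insert v s.computed }
  | .delete v, t => v ∈ s.red ∧ t = { s with red := s.red.erase v }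

inductive RBPReaches (G : DirGraph V) (r : ℕ) :
    RBPState V → List (RBPMove V) → RBPState V → Prop
  | nil (s : RBPState V) : RBPReaches G r s [] s
  | cons {s t u : RBPState V} {m : RBPMove V} {L : List (RBPMove V)} :
      RBPStep G r s m t → RBPReaches G r t L u → RBPReaches G r s (m :: L) u

noncomputable def RBPInit (G : DirGraph V) : RBPState V :=
  ⟨∅, Finset.univ.filter (fun v => G.IsSource v), ∅⟩

def RBPValid (G : DirGraph V) (r : ℕ) (L : List (RBPMove V)) : Prop :=
  ∃ t, RBPReaches G r (RBPInit G) L t ∧ ∀ v, G.IsSink v → v ∈ t.blue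

def RBPCost {V : Type} (L : List (RBPMove V)) : ℕ := (L.map RBPMove.ioCost).sum

noncomputable def optRBP (G : DirGraph V) (r : ℕ) : ℕ∞ :=
  sInf ((fun L => (RBPCost L : ℕ∞)) '' {L | RBPValid G r L})

/-! ### The partial-computing red-blue pebble game (PRBP) -/

structure PRBPState (V : Type) where
  lred : Finset V
  dred : Finset V
  blue : Finset V
  marked : Finset (V × V)

def PRBPState.red (s : PRBPState V) : Finset V := s.lred ∪ s.dred

inductive PRBPMove (V : Type) where
  | save : V → PRBPMove V
  | load : V → PRBPMove V
  | pcompute : V → V → PRBPMove V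
  | delete : V → PRBPMove V

def PRBPMove.ioCost {V : Type} : PRBPMove V → ℕ
  | .save _ => 1
  | .load _ => 1
  | _ => 0

def PRBPStep (G : DirGraph V) (r : ℕ) (s : PRBPState V) :
    PRBPMove V → PRBPState V → Prop
  | .save v, t => v ∈ s.dred ∧
      t = { s with lred := insert v s.lred, dred := s.dred.erase v,
                   blue := insert v s.blue }
  | .load v, t => v ∈ s.blue ∧ ((insert v s.lred) ∪ s.dred).card ≤ r ∧
      t = { s with lred := insert v s.lred }
  | .pcompute u v, t => G.E u v ∧ (u, v) ∉ s.marked ∧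
      (∀ w, G.E w u → (w, u) ∈ s.marked) ∧ u ∈ s.red ∧
      (v ∈ s.red ∨ (v ∉ s.red ∧ v ∉ s.blue)) ∧
      ((s.lred.erase v) ∪ (insert v s.dred)).card ≤ r ∧
      t = { s with lred := s.lred.erase v, dred := insert v s.dred,
                   blue := s.blue.erase v, marked := insert (u, v) s.marked }
  | .delete v, t =>
      (v ∈ s.lred ∧ t = { s with lred := s.lred.erase v }) ∨
      (v ∈ s.dred ∧ (∀ w, G.E v w → (v, w) ∈ s.marked) ∧
        t = { s with dred := s.dred.erase v })

inductive PRBPReaches (G : DirGraph V) (r : ℕ) :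
    PRBPState V → List (PRBPMove V) → PRBPState V → Prop
  | nil (s : PRBPState V) : PRBPReaches G r s [] s
  | cons {s t u : PRBPState V} {m : PRBPMove V} {L : List (PRBPMove V)} :
      PRBPStep G r s m t → PRBPReaches G r t L u → PRBPReaches G r s (m :: L) u

noncomputable def PRBPInit (G : DirGraph V) : PRBPState V :=
  ⟨∅, ∅, Finset.univ.filter (fun v => G.IsSource v), ∅⟩

def PRBPValid (G : DirGraph V) (r : ℕ) (L : List (PRBPMove V)) : Prop :=
  ∃ t, PRBPReaches G r (PRBPInit G) L t ∧ (∀ v, G.IsSink v → v ∈ t.blue) ∧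
    ∀ u v, G.E u v → (u, v) ∈ t.marked

def PRBPCost {V : Type} (L : List (PRBPMove V)) : ℕ := (L.map PRBPMove.ioCost).sum

noncomputable def optPRBP (G : DirGraph V) (r : ℕ) : ℕ∞ :=
  sInf ((fun L => (PRBPCost L : ℕ∞)) '' {L | PRBPValid G r L})

/-- `s` is a state reached by some prefix of the pebbling `L`. -/
def PRBPPrefixState (G : DirGraph V) (r : ℕ) (L : List (PRBPMove V))
    (s : PRBPState V) : Prop :=
  ∃ L₁ L₂, L = L₁ ++ L₂ ∧ PRBPReaches G r (PRBPInit G) L₁ s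

/-! ### Paths, dominators, S-partitions -/

/-- A directed path in `G` starting at a source node. -/
def IsSourcePath (G : DirGraph V) (p : List V) : Prop :=
  p ≠ [] ∧ p.Chain' G.E ∧ ∀ h : p ≠ [], G.IsSource (p.head h)

/-- `D` is a dominator for the node set `V₀`. -/
def Dominates (G : DirGraph V) (D : Set V) (V₀ : Set V) : Prop :=
  ∀ p : List V, IsSourcePath G p → ∀ h : p ≠ [], p.getLast h ∈ V₀ →
    ∃ d ∈ D, d ∈ p

/-- The path `p` contains an edge of `E₀` (two consecutive nodes forming it). -/
def PathContainsEdge (p : List V) (E₀ : Set (V × V)) : Prop :=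
  ∃ u v, (u, v) ∈ E₀ ∧ [u, v] <:+: p

/-- `D` is an edge-dominator for the edge set `E₀`. -/
def EdgeDominates (G : DirGraph V) (D : Set V) (E₀ : Set (V × V)) : Prop :=
  ∀ p : List V, IsSourcePath G p → PathContainsEdge p E₀ → ∃ d ∈ D, d ∈ p

/-- The terminal set of a node set `V₀`: nodes of `V₀` with no out-neighbor in `V₀`. -/
def terminalSet (G : DirGraph V) (V₀ : Set V) : Set V :=
  {v | v ∈ V₀ ∧ ∀ w, G.E v w → w ∉ V₀}

/-- The edge-terminal set of an edge set `E₀`. -/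
def edgeTerminalSet (E₀ : Set (V × V)) : Set V :=
  {v | (∃ u, (u, v) ∈ E₀) ∧ ∀ w, (v, w) ∉ E₀}

/-- An `S`-partition of the DAG `G` (Hong–Kung). -/
def IsSPartition (G : DirGraph V) (S : ℕ) (k : ℕ) (P : Fin k → Set V) : Prop :=
  (∀ v : V, ∃! i, v ∈ P i) ∧
  (∀ i j : Fin k, j < i → ∀ u v, u ∈ P i → v ∈ P j → ¬ G.E u v) ∧
  (∀ i, ∃ D : Set V, D.ncard ≤ S ∧ Dominates G D (P i)) ∧
  (∀ i, (terminalSet G (P i)).ncard ≤ S)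

/-- An `S`-dominator partition of the DAG `G`: an `S`-partition without the
terminal-set condition. -/
def IsSDomPartition (G : DirGraph V) (S : ℕ) (k : ℕ) (P : Fin k → Set V) : Prop :=
  (∀ v : V, ∃! i, v ∈ P i) ∧
  (∀ i j : Fin k, j < i → ∀ u v, u ∈ P i → v ∈ P j → ¬ G.E u v) ∧
  (∀ i, ∃ D : Set V, D.ncard ≤ S ∧ Dominates G D (P i))

/-- An `S`-edge partition of the DAG `G`. -/
def IsSEdgePartition (G : DirGraph V) (S : ℕ) (k : ℕ)
    (P : Fin k → Set (V × V)) : Prop :=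
  (∀ i, P i ⊆ {e | G.E e.1 e.2}) ∧
  (∀ u v, G.E u v → ∃! i, (u, v) ∈ P i) ∧
  (∀ i j : Fin k, i < j → ∀ u v w, G.E u v → G.E v w →
      ¬ ((v, w) ∈ P i ∧ (u, v) ∈ P j)) ∧
  (∀ i, ∃ D : Set V, D.ncard ≤ S ∧ EdgeDominates G D (P i)) ∧
  (∀ i, (edgeTerminalSet (P i)).ncard ≤ S)

noncomputable def minEdgePartition (G : DirGraph V) (S : ℕ) : ℕ :=
  sInf {k | ∃ P : Fin k → Set (V × V), IsSEdgePartition G S k P}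

noncomputable def minDomPartition (G : DirGraph V) (S : ℕ) : ℕ :=
  sInf {k | ∃ P : Fin k → Set V, IsSDomPartition G S k P}

noncomputable def minSPartition (G : DirGraph V) (S : ℕ) : ℕ :=
  sInf {k | ∃ P : Fin k → Set V, IsSPartition G S k P}
/-- Nodes of the matrix-vector multiplication DAG `y = A·x` for an `m × m`
matrix: entries `A_{j,i}` (left), entries `x_i`, products `p_{j,i}`, sinks `y_j`. -/
abbrev MVNode (m : ℕ) := (Fin m × Fin m) ⊕ (Fin m ⊕ ((Fin m × Fin m) ⊕ Fin m))

def MVG (m : ℕ) : DirGraph (MVNode m) :=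
  ⟨fun a b =>
    match a, b with
    | Sum.inl ji, Sum.inr (Sum.inr (Sum.inl ji')) => ji' = ji
    | Sum.inr (Sum.inl i), Sum.inr (Sum.inr (Sum.inl ji)) => ji.2 = i
    | Sum.inr (Sum.inr (Sum.inl ji)), Sum.inr (Sum.inr (Sum.inr j)) => ji.1 = j
    | _, _ => False⟩

/-! ### Auxiliary: MVG structure -/

namespace MatVecAux

open DirGraph

variable {m : ℕ}

abbrev nA (j i : Fin m) : MVNode m := Sum.inl (j, i)
abbrev nX (i : Fin m) : MVNode m := Sum.inr (Sum.inl i)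
abbrev nP (j i : Fin m) : MVNode m := Sum.inr (Sum.inr (Sum.inl (j, i)))
abbrev nY (j : Fin m) : MVNode m := Sum.inr (Sum.inr (Sum.inr j))

lemma E_iff (a b : MVNode m) : (MVG m).E a b ↔
    (∃ j i, a = nA j i ∧ b = nP j i) ∨ (∃ j i, a = nX i ∧ b = nP j i) ∨
    (∃ j i, a = nP j i ∧ b = nY j) := by
  rcases a with ⟨j, i⟩ | i | ⟨j, i⟩ | j <;>
    rcases b with ⟨j', i'⟩ | i' | ⟨j', i'⟩ | j' <;>
    first
      | (simp [MVG, Prod.ext_iff, eq_comm, and_comm]; done)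
      | (simp [MVG, Prod.ext_iff, eq_comm, and_comm]; aesop)

lemma not_E_into_A (u : MVNode m) (j i : Fin m) : ¬ (MVG m).E u (nA j i) := by
  rw [E_iff]; simp

lemma not_E_into_X (u : MVNode m) (i : Fin m) : ¬ (MVG m).E u (nX i) := by
  rw [E_iff]; simp

lemma E_into_P (u : MVNode m) (j i : Fin m) :
    (MVG m).E u (nP j i) ↔ u = nA j i ∨ u = nX i := by
  rw [E_iff]; first | (simp [Prod.ext_iff]; done) | (simp [Prod.ext_iff]; aesop)

lemma E_into_Y (u : MVNode m) (j : Fin m) :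
    (MVG m).E u (nY j) ↔ ∃ i, u = nP j i := by
  rw [E_iff]; first | (simp [Prod.ext_iff]; done) | (simp [Prod.ext_iff]; aesop)

lemma E_A (j i : Fin m) (b : MVNode m) : (MVG m).E (nA j i) b ↔ b = nP j i := by
  rw [E_iff]; first | (simp [Prod.ext_iff]; done) | (simp [Prod.ext_iff]; aesop)

lemma E_X (i : Fin m) (b : MVNode m) : (MVG m).E (nX i) b ↔ ∃ j, b = nP j i := by
  rw [E_iff]; first | (simp [Prod.ext_iff]; done) | (simp [Prod.ext_iff]; aesop)

lemma E_P (j i : Fin m) (b : MVNode m) : (MVG m).E (nP j i) b ↔ b = nY j := by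
  rw [E_iff]; first | (simp [Prod.ext_iff]; done) | (simp [Prod.ext_iff]; aesop)

lemma not_E_Y (j : Fin m) (b : MVNode m) : ¬ (MVG m).E (nY j) b := by
  rw [E_iff]; simp

lemma isSource_A (j i : Fin m) : (MVG m).IsSource (nA j i) :=
  fun u => not_E_into_A u j i

lemma isSource_X (i : Fin m) : (MVG m).IsSource (nX i) :=
  fun u => not_E_into_X u i

lemma not_isSource_P (j i : Fin m) : ¬ (MVG m).IsSource (nP j i) := by
  intro h; exact h (nA j i) ((E_A j i _).2 rfl)

lemma not_isSource_Y (j : Fin m) : ¬ (MVG m).IsSource (nY j) := by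
  intro h
  exact h (nP j ⟨0, Fin.pos j⟩) ((E_P _ _ _).2 rfl)

lemma isSink_Y (j : Fin m) : (MVG m).IsSink (nY j) := fun u => not_E_Y j u

lemma isSink_iff (v : MVNode m) : (MVG m).IsSink v ↔ ∃ j, v = nY j := by
  constructor
  · intro h
    rcases v with ⟨j, i⟩ | i | ⟨j, i⟩ | j
    · exact absurd ((E_A j i _).2 rfl) (h _)
    · exact absurd ((E_X i _).2 ⟨i, rfl⟩) (h _)
    · exact absurd ((E_P j i _).2 rfl) (h _)
    · exact ⟨j, rfl⟩
  · rintro ⟨j, rfl⟩; exact isSink_Y j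

lemma isSource_iff (v : MVNode m) :
    (MVG m).IsSource v ↔ (∃ j i, v = nA j i) ∨ ∃ i, v = nX i := by
  constructor
  · intro h
    rcases v with ⟨j, i⟩ | i | ⟨j, i⟩ | j
    · exact Or.inl ⟨j, i, rfl⟩
    · exact Or.inr ⟨i, rfl⟩
    · exact absurd h (not_isSource_P j i)
    · exact absurd h (not_isSource_Y j)
  · rintro (⟨j, i, rfl⟩ | ⟨i, rfl⟩)
    · exact isSource_A j i
    · exact isSource_X i

/-! ### Counting lemmas -/

lemma countP_le_sum_map {α : Type*} (L : List α) (f : α → ℕ) (p : α → Bool)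
    (h : ∀ a, p a → 1 ≤ f a) : L.countP p ≤ (L.map f).sum := by
  induction L with
  | nil => simp
  | cons a L ih =>
      rw [List.countP_cons, List.map_cons, List.sum_cons]
      by_cases hp : p a
      · have := h a hp; simp [hp]; omega
      · simp [hp]; omega

lemma card_le_countP {α : Type*} [DecidableEq α] (L : List α) (S : Finset α)
    (p : α → Bool) (hS : ∀ a ∈ S, a ∈ L ∧ p a) : S.card ≤ L.countP p := by
  have h1 : S ⊆ (L.filter p).toFinset := by
    intro a ha
    rcases hS a ha with ⟨h2, h3⟩
    simp [List.mem_filter, h2, h3]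
  calc S.card ≤ (L.filter p).toFinset.card := Finset.card_le_card h1
    _ ≤ (L.filter p).length := (L.filter p).toFinset_card_le
    _ = L.countP p := (List.countP_eq_length_filter (p := p) (l := L)).symm

lemma card_le_sum_map {α : Type*} (L : List α) (f : α → ℕ) (P : Finset ℕ)
    (hP : ∀ k ∈ P, ∃ h : k < L.length, f (L.get ⟨k, h⟩) = 1) :
    P.card ≤ (L.map f).sum := by
  have hlt : ∀ k ∈ P, k < L.length := fun k hk => (hP k hk).1
  have hmap : (L.map f).sum = ∑ i : Fin L.length, f (L.get i) := by
    conv_lhs => rw [← List.ofFn_get L]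
    rw [List.map_ofFn, List.sum_ofFn]
    rfl
  rw [hmap]
  calc P.card = (P.attachFin hlt).card := (Finset.card_attachFin P hlt).symm
    _ = ∑ _i ∈ P.attachFin hlt, 1 := Finset.card_eq_sum_ones _
    _ ≤ ∑ i ∈ P.attachFin hlt, f (L.get i) := Finset.sum_le_sum (fun i hi => by
        have hk : (i : ℕ) ∈ P := (Finset.mem_attachFin hlt).1 hi
        rcases hP i hk with ⟨h, he⟩
        rw [show (⟨(i : ℕ), h⟩ : Fin L.length) = i from Fin.eta i h] at he
        omega)
    _ ≤ ∑ i : Fin L.length, f (L.get i) :=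
        Finset.sum_le_sum_of_subset (Finset.subset_univ _)

end MatVecAux
/-! ### PRBP: general reachability lemmas -/

namespace MatVecAux

open DirGraph

section PRBPGeneral

variable {V : Type} [Fintype V] [DecidableEq V] {G : DirGraph V} {r : ℕ}

lemma PRBPReaches_append {s t u : PRBPState V} {L1 L2 : List (PRBPMove V)}
    (h1 : PRBPReaches G r s L1 t) (h2 : PRBPReaches G r t L2 u) :
    PRBPReaches G r s (L1 ++ L2) u := by
  induction h1 with
  | nil => simpa
  | cons hstep _ ih => exact .cons hstep (ih h2)

lemma prbp_step_red {s t : PRBPState V} {mv : PRBPMove V}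
    (h : PRBPStep G r s mv t) {u : V} (hu : u ∈ t.red) :
    u ∈ s.red ∨ mv = .load u ∨ ∃ w, mv = .pcompute w u := by
  cases mv with
  | save v =>
      obtain ⟨hv, rfl⟩ := h
      simp only [PRBPState.red, Finset.mem_union, Finset.mem_insert,
        Finset.mem_erase] at hu ⊢
      rcases hu with (rfl | h1) | ⟨_, h2⟩
      · exact Or.inl (Or.inr hv)
      · exact Or.inl (Or.inl h1)
      · exact Or.inl (Or.inr h2)
  | load v =>
      obtain ⟨hv, hc, rfl⟩ := h
      simp only [PRBPState.red, Finset.mem_union, Finset.mem_insert] at hu ⊢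
      rcases hu with (rfl | h1) | h2
      · exact Or.inr (Or.inl rfl)
      · exact Or.inl (Or.inl h1)
      · exact Or.inl (Or.inr h2)
  | pcompute w v =>
      obtain ⟨_, _, _, _, _, _, rfl⟩ := h
      simp only [PRBPState.red, Finset.mem_union, Finset.mem_erase,
        Finset.mem_insert] at hu ⊢
      rcases hu with ⟨_, h1⟩ | (rfl | h2)
      · exact Or.inl (Or.inl h1)
      · exact Or.inr (Or.inr ⟨w, rfl⟩)
      · exact Or.inl (Or.inr h2)
  | delete v =>
      rcases h with ⟨hv, rfl⟩ | ⟨hv, _, rfl⟩ <;>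
      · simp only [PRBPState.red, Finset.mem_union, Finset.mem_erase] at hu ⊢
        tauto

lemma prbp_step_blue {s t : PRBPState V} {mv : PRBPMove V}
    (h : PRBPStep G r s mv t) {v : V} (hv : v ∈ t.blue) :
    v ∈ s.blue ∨ mv = .save v := by
  cases mv with
  | save w =>
      obtain ⟨_, rfl⟩ := h
      simp only [Finset.mem_insert] at hv
      rcases hv with rfl | h1
      · exact Or.inr rfl
      · exact Or.inl h1
  | load w => obtain ⟨_, _, rfl⟩ := h; exact Or.inl hv
  | pcompute w u =>
      obtain ⟨_, _, _, _, _, _, rfl⟩ := h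
      exact Or.inl (Finset.mem_of_mem_erase hv)
  | delete w => rcases h with ⟨_, rfl⟩ | ⟨_, _, rfl⟩ <;> exact Or.inl hv

lemma prbp_step_marked {s t : PRBPState V} {mv : PRBPMove V}
    (h : PRBPStep G r s mv t) {u v : V} (hm : (u, v) ∈ t.marked) :
    (u, v) ∈ s.marked ∨ (mv = .pcompute u v ∧ u ∈ s.red) := by
  cases mv with
  | save w => obtain ⟨_, rfl⟩ := h; exact Or.inl hm
  | load w => obtain ⟨_, _, rfl⟩ := h; exact Or.inl hm
  | pcompute w x =>
      obtain ⟨_, _, _, hred, _, _, rfl⟩ := h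
      simp only [Finset.mem_insert, Prod.mk.injEq] at hm
      rcases hm with ⟨rfl, rfl⟩ | h1
      · exact Or.inr ⟨rfl, hred⟩
      · exact Or.inl h1
  | delete w => rcases h with ⟨_, rfl⟩ | ⟨_, _, rfl⟩ <;> exact Or.inl hm

lemma prbp_red_events {s t : PRBPState V} {L : List (PRBPMove V)}
    (h : PRBPReaches G r s L t) {u : V} (hu : u ∈ t.red) :
    u ∈ s.red ∨ PRBPMove.load u ∈ L ∨ ∃ w, PRBPMove.pcompute w u ∈ L := by
  induction h with
  | nil => exact Or.inl hu
  | @cons s t' u' mv L hstep _ ih =>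
      rcases ih hu with h1 | h1 | ⟨w, h1⟩
      · rcases prbp_step_red hstep h1 with h2 | h2 | ⟨w, h2⟩
        · exact Or.inl h2
        · exact Or.inr (Or.inl (h2 ▸ List.mem_cons_self))
        · exact Or.inr (Or.inr ⟨w, h2 ▸ List.mem_cons_self⟩)
      · exact Or.inr (Or.inl (List.mem_cons_of_mem _ h1))
      · exact Or.inr (Or.inr ⟨w, List.mem_cons_of_mem _ h1⟩)

lemma prbp_blue_events {s t : PRBPState V} {L : List (PRBPMove V)}
    (h : PRBPReaches G r s L t) {v : V} (hv : v ∈ t.blue) :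
    v ∈ s.blue ∨ PRBPMove.save v ∈ L := by
  induction h with
  | nil => exact Or.inl hv
  | @cons s t' u' mv L hstep _ ih =>
      rcases ih hv with h1 | h1
      · rcases prbp_step_blue hstep h1 with h2 | h2
        · exact Or.inl h2
        · exact Or.inr (h2 ▸ List.mem_cons_self)
      · exact Or.inr (List.mem_cons_of_mem _ h1)

lemma prbp_marked_events {s t : PRBPState V} {L : List (PRBPMove V)}
    (h : PRBPReaches G r s L t) {u v : V} (hm : (u, v) ∈ t.marked) :
    (u, v) ∈ s.marked ∨ u ∈ s.red ∨
      PRBPMove.load u ∈ L ∨ ∃ w, PRBPMove.pcompute w u ∈ L := by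
  induction h with
  | nil => exact Or.inl hm
  | @cons s t' u' mv L hstep hre ih =>
      rcases ih hm with h1 | h1 | h1 | ⟨w, h1⟩
      · rcases prbp_step_marked hstep h1 with h2 | ⟨h2, h3⟩
        · exact Or.inl h2
        · exact Or.inr (Or.inl h3)
      · rcases prbp_step_red hstep h1 with h2 | h2 | ⟨w, h2⟩
        · exact Or.inr (Or.inl h2)
        · exact Or.inr (Or.inr (Or.inl (h2 ▸ List.mem_cons_self)))
        · exact Or.inr (Or.inr (Or.inr ⟨w, h2 ▸ List.mem_cons_self⟩))
      · exact Or.inr (Or.inr (Or.inl (List.mem_cons_of_mem _ h1)))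
      · exact Or.inr (Or.inr (Or.inr ⟨w, List.mem_cons_of_mem _ h1⟩))

/-- every pcompute occurring in a legal run is along an edge -/
lemma prbp_pcompute_edge {s t : PRBPState V} {L : List (PRBPMove V)}
    (h : PRBPReaches G r s L t) {u w : V} (hmem : PRBPMove.pcompute w u ∈ L) :
    G.E w u := by
  induction h with
  | nil => simp at hmem
  | @cons s t' u' mv L hstep _ ih =>
      rcases List.mem_cons.1 hmem with rfl | h1
      · exact hstep.1
      · exact ih h1

end PRBPGeneral

/-! ### PRBP lower bound for MVG -/

lemma prbp_cost_lower {m r : ℕ} (hm : 1 ≤ m) (L : List (PRBPMove (MVNode m)))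
    (hL : PRBPValid (MVG m) r L) : m ^ 2 + 2 * m ≤ PRBPCost L := by
  obtain ⟨t, hreach, hsink, hmark⟩ := hL
  -- each source must be loaded
  have hinit_red : (PRBPInit (MVG m)).red = ∅ := by
    simp [PRBPInit, PRBPState.red]
  have hinit_marked : (PRBPInit (MVG m)).marked = ∅ := rfl
  have hloadA : ∀ j i : Fin m, PRBPMove.load (nA j i) ∈ L := by
    intro j i
    have hedge : (MVG m).E (nA j i) (nP j i) := (E_A j i _).2 rfl
    have hm1 : (nA j i, nP j i) ∈ t.marked := hmark _ _ hedge
    rcases prbp_marked_events hreach hm1 with h1 | h1 | h1 | ⟨w, h1⟩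
    · simp [hinit_marked] at h1
    · simp [hinit_red] at h1
    · exact h1
    · exact absurd (prbp_pcompute_edge hreach h1) (not_E_into_A w j i)
  have hloadX : ∀ i : Fin m, PRBPMove.load (nX i) ∈ L := by
    intro i
    have hedge : (MVG m).E (nX i) (nP i i) := by rw [E_X]; exact ⟨i, rfl⟩
    have hm1 : (nX i, nP i i) ∈ t.marked := hmark _ _ hedge
    rcases prbp_marked_events hreach hm1 with h1 | h1 | h1 | ⟨w, h1⟩
    · simp [hinit_marked] at h1
    · simp [hinit_red] at h1
    · exact h1
    · exact absurd (prbp_pcompute_edge hreach h1) (not_E_into_X w i)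
  have hsaveY : ∀ j : Fin m, PRBPMove.save (nY j) ∈ L := by
    intro j
    have hb : nY j ∈ t.blue := hsink _ (isSink_Y j)
    rcases prbp_blue_events hreach hb with h1 | h1
    · simp only [PRBPInit, Finset.mem_filter] at h1
      exact absurd h1.2 (not_isSource_Y j)
    · exact h1
  -- assemble the finset of distinct cost-1 moves
  set SA : Finset (PRBPMove (MVNode m)) :=
    Finset.univ.image (fun ji : Fin m × Fin m => PRBPMove.load (nA ji.1 ji.2))
  set SX : Finset (PRBPMove (MVNode m)) :=
    Finset.univ.image (fun i : Fin m => PRBPMove.load (nX i))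
  set SY : Finset (PRBPMove (MVNode m)) :=
    Finset.univ.image (fun j : Fin m => PRBPMove.save (nY j))
  have hSA : SA.card = m ^ 2 := by
    rw [Finset.card_image_of_injective _ (fun a b h => by
      simpa [nA, Prod.ext_iff] using h)]
    simp [sq]
  have hSX : SX.card = m := by
    rw [Finset.card_image_of_injective _ (fun a b h => by simpa [nX] using h)]
    simp
  have hSY : SY.card = m := by
    rw [Finset.card_image_of_injective _ (fun a b h => by simpa [nY] using h)]
    simp
  have hdisj1 : Disjoint SA SX := by
    simp only [SA, SX, Finset.disjoint_left, Finset.mem_image]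
    rintro a ⟨ji, _, rfl⟩ ⟨i, _, h⟩
    simp [nA, nX] at h
  have hdisj2 : Disjoint (SA ∪ SX) SY := by
    simp only [SA, SX, SY, Finset.disjoint_left, Finset.mem_union,
      Finset.mem_image]
    rintro a (⟨ji, _, rfl⟩ | ⟨i, _, rfl⟩) ⟨j, _, h⟩ <;> simp [nA, nX, nY] at h
  have hcard : (SA ∪ SX ∪ SY).card = m ^ 2 + 2 * m := by
    rw [Finset.card_union_of_disjoint hdisj2, Finset.card_union_of_disjoint hdisj1,
      hSA, hSX, hSY]
    ring
  have hmem : ∀ a ∈ SA ∪ SX ∪ SY, a ∈ L ∧ (PRBPMove.ioCost a = 1 : Bool) := by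
    intro a ha
    simp only [SA, SX, SY, Finset.mem_union, Finset.mem_image] at ha
    rcases ha with (⟨ji, _, rfl⟩ | ⟨i, _, rfl⟩) | ⟨j, _, rfl⟩
    · exact ⟨hloadA ji.1 ji.2, by simp [PRBPMove.ioCost]⟩
    · exact ⟨hloadX i, by simp [PRBPMove.ioCost]⟩
    · exact ⟨hsaveY j, by simp [PRBPMove.ioCost]⟩
  calc m ^ 2 + 2 * m = (SA ∪ SX ∪ SY).card := hcard.symm
    _ ≤ L.countP (fun a => PRBPMove.ioCost a = 1) := card_le_countP L _ _ hmem
    _ ≤ (L.map PRBPMove.ioCost).sum := countP_le_sum_map L _ _ (by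
        intro a ha
        simp only [decide_eq_true_eq] at ha
        omega)
    _ = PRBPCost L := rfl

end MatVecAux
/-! ### PRBP upper bound: the explicit strategy -/

namespace MatVecAux

open DirGraph

variable {m : ℕ}

/-- initial blue set -/
noncomputable def B0 (m : ℕ) : Finset (MVNode m) :=
  Finset.univ.filter (fun v => (MVG m).IsSource v)

lemma mem_B0_A (j i : Fin m) : nA j i ∈ B0 m := by
  simp [B0, isSource_A]

lemma mem_B0_X (i : Fin m) : nX i ∈ B0 m := by
  simp [B0, isSource_X]

lemma not_mem_B0_P (j i : Fin m) : nP j i ∉ B0 m := by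
  simp [B0, not_isSource_P]

lemma not_mem_B0_Y (j : Fin m) : nY j ∉ B0 m := by
  simp [B0, not_isSource_Y]

def rowMoves (i j : Fin m) : List (PRBPMove (MVNode m)) :=
  [.load (nA j i), .pcompute (nA j i) (nP j i), .pcompute (nX i) (nP j i),
   .delete (nA j i), .pcompute (nP j i) (nY j), .delete (nP j i)]

def colMoves (i : Fin m) : List (PRBPMove (MVNode m)) :=
  .load (nX i) ::
    (((List.finRange m).flatMap fun j => rowMoves i j) ++ [.delete (nX i)])

def allMoves (m : ℕ) : List (PRBPMove (MVNode m)) :=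
  ((List.finRange m).flatMap fun i => colMoves i) ++
    (List.finRange m).map fun j => .save (nY j)

def Mstep (i j : Fin m) (M : Finset (MVNode m × MVNode m)) :
    Finset (MVNode m × MVNode m) :=
  insert (nP j i, nY j) (insert (nX i, nP j i) (insert (nA j i, nP j i) M))

lemma card_le_of_sub_imageY {D : Finset (MVNode m)}
    (hD : ∀ v ∈ D, ∃ j, v = nY j) : D.card ≤ m := by
  have h1 : D ⊆ Finset.univ.image (fun j : Fin m => nY j) := by
    intro v hv
    rcases hD v hv with ⟨j, rfl⟩
    exact Finset.mem_image.2 ⟨j, Finset.mem_univ j, rfl⟩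
  calc D.card ≤ (Finset.univ.image (fun j : Fin m => nY j)).card :=
        Finset.card_le_card h1
    _ ≤ Finset.univ.card := Finset.card_image_le
    _ = m := by simp

lemma row_reach {r : ℕ} (hr : m + 3 ≤ r) (i j : Fin m)
    (D : Finset (MVNode m)) (M : Finset (MVNode m × MVNode m))
    (hD : ∀ v ∈ D, ∃ j', v = nY j')
    (hM1 : (nA j i, nP j i) ∉ M) (hM2 : (nX i, nP j i) ∉ M)
    (hM3 : (nP j i, nY j) ∉ M) :
    PRBPReaches (MVG m) r ⟨{nX i}, D, B0 m, M⟩ (rowMoves i j)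
      ⟨{nX i}, insert (nY j) D, B0 m, Mstep i j M⟩ := by
  have hDcard : D.card ≤ m := card_le_of_sub_imageY hD
  have hPD : nP j i ∉ D := by
    intro h; rcases hD _ h with ⟨j', h'⟩; simp [nP, nY] at h'
  have hYD : nY j ∈ D ∨ nY j ∉ D := em _
  -- step 1 : load A
  refine PRBPReaches.cons (t := ⟨insert (nA j i) {nX i}, D, B0 m, M⟩) ?_ ?_
  · refine ⟨mem_B0_A j i, ?_, rfl⟩
    calc ((insert (nA j i) {nX i} ∪ D : Finset (MVNode m))).card
        ≤ (insert (nA j i) ({nX i} : Finset (MVNode m))).card + D.card := Finset.card_union_le _ _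
      _ ≤ 2 + m := by
          have h1 := Finset.card_insert_le (nA j i) ({nX i} : Finset (MVNode m))
          have h2 : ({nX i} : Finset (MVNode m)).card = 1 := Finset.card_singleton _
          omega
      _ ≤ r := by omega
  -- step 2 : pcompute A P
  refine PRBPReaches.cons
    (t := ⟨insert (nA j i) {nX i}, insert (nP j i) D, B0 m,
           insert (nA j i, nP j i) M⟩) ?_ ?_
  · have hPlred : nP j i ∉ insert (nA j i) ({nX i} : Finset (MVNode m)) := by simp [nP, nA, nX]
    refine ⟨(E_A j i _).2 rfl, hM1, fun w hw => absurd hw (not_E_into_A w j i),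
      ?_, ?_, ?_, ?_⟩
    · simp [PRBPState.red]
    · refine Or.inr ⟨?_, not_mem_B0_P j i⟩
      simp only [PRBPState.red, Finset.mem_union]
      rintro (h | h)
      · exact hPlred h
      · exact hPD h
    · calc (((insert (nA j i) ({nX i} : Finset (MVNode m))).erase (nP j i) ∪ insert (nP j i) D : Finset (MVNode m))).card
          ≤ (insert (nA j i) ({nX i} : Finset (MVNode m))).card + (insert (nP j i) D).card := by
            refine le_trans (Finset.card_union_le _ _) ?_
            have h3 : ((insert (nA j i) ({nX i} : Finset (MVNode m))).erase (nP j i)).card ≤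
                (insert (nA j i) ({nX i} : Finset (MVNode m))).card :=
              Finset.card_erase_le
            omega
        _ ≤ 2 + (m + 1) := by
            have h1 := Finset.card_insert_le (nA j i) ({nX i} : Finset (MVNode m))
            have h1' : ({nX i} : Finset (MVNode m)).card = 1 := Finset.card_singleton _
            have h2 := Finset.card_insert_le (nP j i) D
            omega
        _ ≤ r := by omega
    · rw [Finset.erase_eq_of_notMem hPlred,
        Finset.erase_eq_of_notMem (not_mem_B0_P j i)]
      try rfl
  -- step 3 : pcompute X P
  refine PRBPReaches.cons
    (t := ⟨insert (nA j i) {nX i}, insert (nP j i) D, B0 m,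
           insert (nX i, nP j i) (insert (nA j i, nP j i) M)⟩) ?_ ?_
  · have hPlred : nP j i ∉ insert (nA j i) ({nX i} : Finset (MVNode m)) := by simp [nP, nA, nX]
    refine ⟨by rw [E_X]; exact ⟨j, rfl⟩, ?_, fun w hw => absurd hw (not_E_into_X w i),
      ?_, ?_, ?_, ?_⟩
    · simp only [Finset.mem_insert, Prod.mk.injEq, not_or]
      exact ⟨by simp [nA, nX], hM2⟩
    · simp [PRBPState.red]
    · refine Or.inl ?_
      simp [PRBPState.red]
    · calc (((insert (nA j i) ({nX i} : Finset (MVNode m))).erase (nP j i) ∪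
            insert (nP j i) (insert (nP j i) D) : Finset (MVNode m))).card
          ≤ (insert (nA j i) ({nX i} : Finset (MVNode m))).card + (insert (nP j i) D).card := by
            rw [Finset.insert_idem]
            refine le_trans (Finset.card_union_le _ _) ?_
            have h3 : ((insert (nA j i) ({nX i} : Finset (MVNode m))).erase (nP j i)).card ≤
                (insert (nA j i) ({nX i} : Finset (MVNode m))).card :=
              Finset.card_erase_le
            omega
        _ ≤ 2 + (m + 1) := by
            have h1 := Finset.card_insert_le (nA j i) ({nX i} : Finset (MVNode m))
            have h1' : ({nX i} : Finset (MVNode m)).card = 1 := Finset.card_singleton _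
            have h2 := Finset.card_insert_le (nP j i) D
            omega
        _ ≤ r := by omega
    · rw [Finset.erase_eq_of_notMem hPlred, Finset.insert_idem,
        Finset.erase_eq_of_notMem (not_mem_B0_P j i)]
      try rfl
  -- step 4 : delete A
  refine PRBPReaches.cons
    (t := ⟨{nX i}, insert (nP j i) D, B0 m,
           insert (nX i, nP j i) (insert (nA j i, nP j i) M)⟩) ?_ ?_
  · refine Or.inl ⟨by simp, ?_⟩
    have hA : nA j i ∉ ({nX i} : Finset (MVNode m)) := by simp [nA, nX]
    rw [Finset.erase_insert hA]
    try rfl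
  -- step 5 : pcompute P Y
  refine PRBPReaches.cons
    (t := ⟨{nX i}, insert (nY j) (insert (nP j i) D), B0 m,
           Mstep i j M⟩) ?_ ?_
  · refine ⟨(E_P j i _).2 rfl, ?_, ?_, ?_, ?_, ?_, ?_⟩
    · simp only [Finset.mem_insert, Prod.mk.injEq, not_or]
      exact ⟨by simp [nP, nX], by simp [nP, nA], hM3⟩
    · intro w hw
      rw [E_into_P] at hw
      rcases hw with rfl | rfl
      · simp
      · simp
    · simp [PRBPState.red]
    · rcases hYD with hY | hY
      · refine Or.inl ?_
        simp only [PRBPState.red, Finset.mem_union, Finset.mem_insert]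
        exact Or.inr (Or.inr hY)
      · refine Or.inr ⟨?_, not_mem_B0_Y j⟩
        simp only [PRBPState.red, Finset.mem_union, Finset.mem_singleton,
          Finset.mem_insert, not_or]
        exact ⟨by simp [nY, nX], by simp [nY, nP], hY⟩
    · calc ((({nX i} : Finset (MVNode m)).erase (nY j) ∪
            insert (nY j) (insert (nP j i) D) : Finset (MVNode m))).card
          ≤ 1 + (1 + (1 + m)) := by
            refine le_trans (Finset.card_union_le _ _) ?_
            have h0 : (({nX i} : Finset (MVNode m)).erase (nY j)).card ≤
                ({nX i} : Finset (MVNode m)).card := Finset.card_erase_le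
            have h0' : ({nX i} : Finset (MVNode m)).card = 1 := Finset.card_singleton _
            have h1 := Finset.card_insert_le (nY j) (insert (nP j i) D)
            have h2 := Finset.card_insert_le (nP j i) D
            omega
        _ ≤ r := by omega
    · have hYX : nY j ∉ ({nX i} : Finset (MVNode m)) := by simp [nY, nX]
      rw [Finset.erase_eq_of_notMem hYX,
        Finset.erase_eq_of_notMem (not_mem_B0_Y j)]
      try rfl
  -- step 6 : delete P
  refine PRBPReaches.cons
    (t := ⟨{nX i}, insert (nY j) D, B0 m, Mstep i j M⟩) ?_ (PRBPReaches.nil _)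
  · refine Or.inr ⟨by simp [nP, nY], ?_, ?_⟩
    · intro w hw
      rw [E_P] at hw
      subst hw
      simp [Mstep]
    · rw [Finset.erase_insert_of_ne (show nY j ≠ nP j i by simp [nY, nP]),
        Finset.erase_insert hPD]
      try rfl
def Dfold (l : List (Fin m)) (D : Finset (MVNode m)) : Finset (MVNode m) :=
  l.foldl (fun D j => insert (nY j) D) D

def Mfold (i : Fin m) (l : List (Fin m)) (M : Finset (MVNode m × MVNode m)) :
    Finset (MVNode m × MVNode m) :=
  l.foldl (fun M j => Mstep i j M) M

lemma mem_Dfold {x : MVNode m} : ∀ (l : List (Fin m)) (D : Finset (MVNode m)),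
    (x ∈ Dfold l D ↔ x ∈ D ∨ ∃ j ∈ l, x = nY j) := by
  intro l
  induction l with
  | nil => intro D; simp [Dfold]
  | cons j l ih =>
      intro D
      rw [show Dfold (j :: l) D = Dfold l (insert (nY j) D) from rfl, ih]
      simp only [Finset.mem_insert, List.mem_cons]
      constructor
      · rintro ((rfl | h) | ⟨j', hj', rfl⟩)
        · exact Or.inr ⟨j, Or.inl rfl, rfl⟩
        · exact Or.inl h
        · exact Or.inr ⟨j', Or.inr hj', rfl⟩
      · rintro (h | ⟨j', (rfl | hj'), rfl⟩)
        · exact Or.inl (Or.inr h)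
        · exact Or.inl (Or.inl rfl)
        · exact Or.inr ⟨j', hj', rfl⟩

lemma mem_Mfold {x : MVNode m × MVNode m} {i : Fin m} :
    ∀ (l : List (Fin m)) (M : Finset (MVNode m × MVNode m)),
    (x ∈ Mfold i l M ↔ x ∈ M ∨ ∃ j ∈ l,
      x = (nA j i, nP j i) ∨ x = (nX i, nP j i) ∨ x = (nP j i, nY j)) := by
  intro l
  induction l with
  | nil => intro M; simp [Mfold]
  | cons j l ih =>
      intro M
      rw [show Mfold i (j :: l) M = Mfold i l (Mstep i j M) from rfl, ih]
      simp only [Mstep, Finset.mem_insert, List.mem_cons]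
      constructor
      · rintro ((rfl | rfl | rfl | h) | ⟨j', hj', h⟩)
        · exact Or.inr ⟨j, Or.inl rfl, Or.inr (Or.inr rfl)⟩
        · exact Or.inr ⟨j, Or.inl rfl, Or.inr (Or.inl rfl)⟩
        · exact Or.inr ⟨j, Or.inl rfl, Or.inl rfl⟩
        · exact Or.inl h
        · exact Or.inr ⟨j', Or.inr hj', h⟩
      · rintro (h | ⟨j', (rfl | hj'), h⟩)
        · exact Or.inl (Or.inr (Or.inr (Or.inr h)))
        · rcases h with rfl | rfl | rfl
          · exact Or.inl (Or.inr (Or.inr (Or.inl rfl)))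
          · exact Or.inl (Or.inr (Or.inl rfl))
          · exact Or.inl (Or.inl rfl)
        · exact Or.inr ⟨j', hj', h⟩

lemma rows_reach {r : ℕ} (hr : m + 3 ≤ r) (i : Fin m) :
    ∀ (l : List (Fin m)), l.Nodup →
    ∀ (D : Finset (MVNode m)) (M : Finset (MVNode m × MVNode m)),
    (∀ v ∈ D, ∃ j', v = nY j') →
    (∀ j ∈ l, (nA j i, nP j i) ∉ M ∧ (nX i, nP j i) ∉ M ∧ (nP j i, nY j) ∉ M) →
    PRBPReaches (MVG m) r ⟨{nX i}, D, B0 m, M⟩ (l.flatMap (rowMoves i))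
      ⟨{nX i}, Dfold l D, B0 m, Mfold i l M⟩ := by
  intro l
  induction l with
  | nil => intro _ D M _ _; simpa [Dfold, Mfold] using
      PRBPReaches.nil (G := MVG m) (r := r) _
  | cons j l ih =>
      intro hnd D M hD hM
      rw [List.flatMap_cons]
      refine PRBPReaches_append (row_reach hr i j D M hD
        (hM j (List.mem_cons_self)).1 (hM j (List.mem_cons_self)).2.1
        (hM j (List.mem_cons_self)).2.2) ?_
      have hres := ih (List.Nodup.of_cons hnd) (insert (nY j) D) (Mstep i j M)
        (by
          intro v hv
          rcases Finset.mem_insert.1 hv with rfl | hv'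
          · exact ⟨j, rfl⟩
          · exact hD v hv')
        (by
          intro j' hj'
          have hne : j' ≠ j := by
            rintro rfl
            exact (List.nodup_cons.1 hnd).1 hj'
          obtain ⟨h1, h2, h3⟩ := hM j' (List.mem_cons_of_mem _ hj')
          refine ⟨?_, ?_, ?_⟩ <;>
            simp [Mstep, h1, h2, h3, Prod.ext_iff, nA, nX, nP, nY, hne,
              Fin.val_eq_val] <;>
            simp [Fin.ext_iff] at hne ⊢ <;> omega)
      exact hres

lemma col_reach {r : ℕ} (hr : m + 3 ≤ r) (i : Fin m)
    (D : Finset (MVNode m)) (M : Finset (MVNode m × MVNode m))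
    (hD : ∀ v ∈ D, ∃ j', v = nY j')
    (hM : ∀ j : Fin m,
      (nA j i, nP j i) ∉ M ∧ (nX i, nP j i) ∉ M ∧ (nP j i, nY j) ∉ M) :
    PRBPReaches (MVG m) r ⟨∅, D, B0 m, M⟩ (colMoves i)
      ⟨∅, Dfold (List.finRange m) D, B0 m, Mfold i (List.finRange m) M⟩ := by
  have hDcard : D.card ≤ m := card_le_of_sub_imageY hD
  have hins : insert (nX i) (∅ : Finset (MVNode m)) = {nX i} := by simp
  refine PRBPReaches.cons (t := ⟨{nX i}, D, B0 m, M⟩) ⟨mem_B0_X i, ?_, ?_⟩ ?_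
  · calc ((insert (nX i) (∅ : Finset (MVNode m)) ∪ D)).card
        ≤ (insert (nX i) (∅ : Finset (MVNode m))).card + D.card :=
          Finset.card_union_le _ _
      _ ≤ 1 + m := by rw [hins]; simp; omega
      _ ≤ r := by omega
  · exact congrArg (fun z => PRBPState.mk z D (B0 m) M) hins.symm
  refine PRBPReaches_append (rows_reach hr i (List.finRange m)
    (List.nodup_finRange m) D M hD (fun j _ => hM j)) ?_
  refine PRBPReaches.cons (t := ⟨∅, Dfold (List.finRange m) D, B0 m,
    Mfold i (List.finRange m) M⟩) ?_ (PRBPReaches.nil _)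
  refine Or.inl ⟨Finset.mem_singleton_self _, ?_⟩
  rw [Finset.erase_singleton]
lemma cols_reach {r : ℕ} (hr : m + 3 ≤ r) :
    ∀ (lc : List (Fin m)), lc.Nodup →
    ∀ (D : Finset (MVNode m)) (M : Finset (MVNode m × MVNode m)),
    (∀ v ∈ D, ∃ j, v = nY j) →
    (∀ i ∈ lc, ∀ j : Fin m,
      (nA j i, nP j i) ∉ M ∧ (nX i, nP j i) ∉ M ∧ (nP j i, nY j) ∉ M) →
    ∃ D' M', PRBPReaches (MVG m) r ⟨∅, D, B0 m, M⟩ (lc.flatMap colMoves)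
        ⟨∅, D', B0 m, M'⟩ ∧ (∀ v ∈ D', ∃ j, v = nY j) ∧ M ⊆ M' ∧ D ⊆ D' ∧
        (lc ≠ [] → ∀ j, nY j ∈ D') ∧
        (∀ i ∈ lc, ∀ j : Fin m, (nA j i, nP j i) ∈ M' ∧ (nX i, nP j i) ∈ M' ∧
          (nP j i, nY j) ∈ M') := by
  intro lc
  induction lc with
  | nil =>
      intro _ D M hD _
      exact ⟨D, M, by simpa using PRBPReaches.nil _, hD, le_refl _, le_refl _,
        fun h => absurd rfl h, by simp⟩
  | cons i lc ih =>
      intro hnd D M hD hM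
      have hcol := col_reach hr i D M hD (fun j => hM i (List.mem_cons_self) j)
      set D1 := Dfold (List.finRange m) D with hD1
      set M1 := Mfold i (List.finRange m) M with hM1
      have hD1p : ∀ v ∈ D1, ∃ j, v = nY j := by
        intro v hv
        rcases (mem_Dfold _ _).1 hv with h | ⟨j, _, rfl⟩
        · exact hD v h
        · exact ⟨j, rfl⟩
      have hD1Y : ∀ j, nY j ∈ D1 := by
        intro j
        exact (mem_Dfold _ _).2 (Or.inr ⟨j, List.mem_finRange j, rfl⟩)
      have hMM1 : M ⊆ M1 := by
        intro x hx
        exact (mem_Mfold _ _).2 (Or.inl hx)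
      have hM1p : ∀ i' ∈ lc, ∀ j : Fin m, (nA j i', nP j i') ∉ M1 ∧
          (nX i', nP j i') ∉ M1 ∧ (nP j i', nY j) ∉ M1 := by
        intro i' hi' j
        have hne : i' ≠ i := by
          rintro rfl
          exact (List.nodup_cons.1 hnd).1 hi'
        obtain ⟨h1, h2, h3⟩ := hM i' (List.mem_cons_of_mem _ hi') j
        refine ⟨?_, ?_, ?_⟩ <;>
        · intro hx
          rcases (mem_Mfold _ _).1 hx with h | ⟨j', _, h⟩
          · first | exact h1 h | exact h2 h | exact h3 h
          · rcases h with h | h | h <;>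
              simp [Prod.ext_iff, nA, nX, nP, nY, Fin.ext_iff] at h <;> omega
      have hM1in : ∀ j : Fin m, (nA j i, nP j i) ∈ M1 ∧ (nX i, nP j i) ∈ M1 ∧
          (nP j i, nY j) ∈ M1 := by
        intro j
        refine ⟨?_, ?_, ?_⟩ <;> exact (mem_Mfold _ _).2
          (Or.inr ⟨j, List.mem_finRange j, by tauto⟩)
      obtain ⟨D', M', hreach, hD', hsub, hDsub, _, hpairs⟩ :=
        ih (List.Nodup.of_cons hnd) D1 M1 hD1p hM1p
      have hDD1 : D ⊆ D1 := fun x hx => (mem_Dfold _ _).2 (Or.inl hx)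
      have hD'Y : ∀ j, nY j ∈ D' := fun j => hDsub (hD1Y j)
      exact ⟨D', M', by rw [List.flatMap_cons]; exact PRBPReaches_append hcol hreach,
        hD', le_trans hMM1 hsub, le_trans hDD1 hDsub, fun _ => hD'Y, by
          intro i' hi' j
          rcases List.mem_cons.1 hi' with rfl | hi''
          · exact ⟨hsub (hM1in j).1, hsub (hM1in j).2.1, hsub (hM1in j).2.2⟩
          · exact hpairs i' hi'' j⟩
lemma saves_reach {r : ℕ} :
    ∀ (l : List (Fin m)), l.Nodup → ∀ (s : PRBPState (MVNode m)),
    (∀ j ∈ l, nY j ∈ s.dred) →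
    ∃ t, PRBPReaches (MVG m) r s (l.map fun j => PRBPMove.save (nY j)) t ∧
      s.blue ⊆ t.blue ∧ (∀ j ∈ l, nY j ∈ t.blue) ∧ t.marked = s.marked := by
  intro l
  induction l with
  | nil => intro _ s _; exact ⟨s, PRBPReaches.nil _, le_refl _, by simp, rfl⟩
  | cons j l ih =>
      intro hnd s hs
      set s1 : PRBPState (MVNode m) :=
        ⟨insert (nY j) s.lred, s.dred.erase (nY j), insert (nY j) s.blue,
          s.marked⟩ with hs1
      have hstep : PRBPStep (MVG m) r s (.save (nY j)) s1 :=
        ⟨hs j (List.mem_cons_self), rfl⟩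
      obtain ⟨t, hreach, hblue, hYblue, hmarked⟩ := ih (List.Nodup.of_cons hnd) s1
        (by
          intro j' hj'
          have hne : j' ≠ j := by
            rintro rfl
            exact (List.nodup_cons.1 hnd).1 hj'
          refine Finset.mem_erase.2 ⟨by simp [nY, Fin.ext_iff] at hne ⊢; omega,
            hs j' (List.mem_cons_of_mem _ hj')⟩)
      refine ⟨t, PRBPReaches.cons hstep hreach, ?_, ?_, by rw [hmarked]⟩
      · exact le_trans (fun x hx => Finset.mem_insert_of_mem hx) hblue
      · intro j' hj'
        rcases List.mem_cons.1 hj' with rfl | hj''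
        · exact hblue (Finset.mem_insert_self _ _)
        · exact hYblue j' hj''

lemma allMoves_valid {r : ℕ} (hm : 1 ≤ m) (hr : m + 3 ≤ r) :
    PRBPValid (MVG m) r (allMoves m) := by
  have hinit : PRBPInit (MVG m) = ⟨∅, ∅, B0 m, ∅⟩ := rfl
  obtain ⟨D', M', hreach, _, _, _, hallY, hpairs⟩ :=
    cols_reach (r := r) hr (List.finRange m) (List.nodup_finRange m) ∅ ∅
      (by simp) (by simp)
  have hne : (List.finRange m) ≠ [] := by
    rw [Ne, List.finRange_eq_nil_iff]
    omega
  obtain ⟨t, hreach2, _, hYblue, hmarked⟩ := saves_reach (r := r)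
    (List.finRange m) (List.nodup_finRange m) ⟨∅, D', B0 m, M'⟩
    (fun j _ => hallY hne j)
  refine ⟨t, ?_, ?_, ?_⟩
  · rw [hinit, allMoves]
    exact PRBPReaches_append hreach hreach2
  · intro v hv
    rcases (isSink_iff v).1 hv with ⟨j, rfl⟩
    exact hYblue j (List.mem_finRange j)
  · intro u v huv
    rw [hmarked]
    rcases (E_iff u v).1 huv with ⟨j, i, rfl, rfl⟩ | ⟨j, i, rfl, rfl⟩ |
      ⟨j, i, rfl, rfl⟩
    · exact (hpairs i (List.mem_finRange i) j).1
    · exact (hpairs i (List.mem_finRange i) j).2.1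
    · exact (hpairs i (List.mem_finRange i) j).2.2

lemma PRBPCost_append {L1 L2 : List (PRBPMove (MVNode m))} :
    PRBPCost (L1 ++ L2) = PRBPCost L1 + PRBPCost L2 := by
  simp [PRBPCost]

lemma PRBPCost_flatMap {α : Type*} (l : List α)
    (f : α → List (PRBPMove (MVNode m))) :
    PRBPCost (l.flatMap f) = (l.map fun a => PRBPCost (f a)).sum := by
  induction l with
  | nil => simp [PRBPCost]
  | cons a l ih => rw [List.flatMap_cons, PRBPCost_append, ih, List.map_cons,
      List.sum_cons]

lemma cost_allMoves : PRBPCost (allMoves m) = m ^ 2 + 2 * m := by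
  have hrow : ∀ i j : Fin m, PRBPCost (rowMoves i j) = 1 := by
    intro i j
    simp [rowMoves, PRBPCost, PRBPMove.ioCost]
  have hcol : ∀ i : Fin m, PRBPCost (colMoves i) = m + 1 := by
    intro i
    rw [colMoves]
    rw [show PRBPCost (PRBPMove.load (nX i) ::
        (((List.finRange m).flatMap fun j => rowMoves i j) ++ [.delete (nX i)]))
      = 1 + (PRBPCost (((List.finRange m).flatMap fun j => rowMoves i j)) +
        PRBPCost [(.delete (nX i) : PRBPMove (MVNode m))]) from by
        simp [PRBPCost, PRBPMove.ioCost]]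
    rw [PRBPCost_flatMap]
    rw [show ((List.finRange m).map fun a => PRBPCost (rowMoves i a)) =
        List.replicate m 1 from by
      rw [show (fun a => PRBPCost (rowMoves i a)) = fun _ => 1 from
        funext (hrow i)]
      simp [List.map_const']]
    simp [List.sum_replicate, PRBPCost, PRBPMove.ioCost]
    omega
  rw [allMoves, PRBPCost_append, PRBPCost_flatMap]
  have h2 : PRBPCost ((List.finRange m).map fun j =>
      (PRBPMove.save (nY j) : PRBPMove (MVNode m))) = m := by
    simp only [PRBPCost, List.map_map]
    rw [show (PRBPMove.ioCost ∘ fun j : Fin m =>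
        (PRBPMove.save (nY j) : PRBPMove (MVNode m))) = (fun _ => 1) from
      funext fun j => rfl]
    simp [List.map_const', List.sum_replicate]
  rw [h2]
  simp only [hcol, List.map_const', List.length_finRange, List.sum_replicate,
    smul_eq_mul]
  ring

lemma optPRBP_eq {r : ℕ} (hm : 1 ≤ m) (hr : m + 3 ≤ r) :
    optPRBP (MVG m) r = ((m ^ 2 + 2 * m : ℕ) : ℕ∞) := by
  refine le_antisymm ?_ ?_
  · refine sInf_le ?_
    exact ⟨allMoves m, allMoves_valid hm hr,
      congrArg (Nat.cast : ℕ → ℕ∞) cost_allMoves⟩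
  · refine le_sInf ?_
    rintro x ⟨L, hL, rfl⟩
    exact Nat.cast_le.2 (prbp_cost_lower hm L hL)
end MatVecAux
/-! ### RBP: indexed trace infrastructure -/

section RBPTrace

variable {V : Type} [Fintype V] [DecidableEq V]

def applyR (s : RBPState V) : RBPMove V → RBPState V
  | .save v => { s with blue := insert v s.blue }
  | .load v => { s with red := insert v s.red }
  | .compute v => { s with red := insert v s.red, computed := insert v s.computed }
  | .delete v => { s with red := s.red.erase v }

def RBPPre (G : DirGraph V) (r : ℕ) (s : RBPState V) : RBPMove V → Prop
  | .save v => v ∈ s.red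
  | .load v => v ∈ s.blue ∧ (insert v s.red).card ≤ r
  | .compute v => ¬ G.IsSource v ∧ v ∉ s.computed ∧
      (∀ u, G.E u v → u ∈ s.red) ∧ (insert v s.red).card ≤ r
  | .delete v => v ∈ s.red

lemma RBPStep_iff {G : DirGraph V} {r : ℕ} {s t : RBPState V} {mv : RBPMove V} :
    RBPStep G r s mv t ↔ RBPPre G r s mv ∧ t = applyR s mv := by
  cases mv <;> simp [RBPStep, RBPPre, applyR, and_assoc]

def sAt (s : RBPState V) (L : List (RBPMove V)) (k : ℕ) : RBPState V :=
  (L.take k).foldl applyR s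

@[simp] lemma sAt_zero (s : RBPState V) (L : List (RBPMove V)) :
    sAt s L 0 = s := rfl

lemma sAt_cons (s : RBPState V) (mv : RBPMove V) (L : List (RBPMove V)) (k : ℕ) :
    sAt s (mv :: L) (k + 1) = sAt (applyR s mv) L k := rfl

lemma sAt_succ (s : RBPState V) (L : List (RBPMove V)) (k : ℕ)
    (h : k < L.length) :
    sAt s L (k + 1) = applyR (sAt s L k) (L.get ⟨k, h⟩) := by
  unfold sAt
  rw [List.take_succ, List.foldl_append, List.getElem?_eq_getElem h]
  rfl

lemma sAt_succ_of_ge (s : RBPState V) (L : List (RBPMove V)) (k : ℕ)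
    (h : L.length ≤ k) : sAt s L (k + 1) = sAt s L k := by
  unfold sAt
  rw [List.take_of_length_le h, List.take_of_length_le (le_trans h (Nat.le_succ k))]

lemma RBPReaches_spec {G : DirGraph V} {r : ℕ} {s t : RBPState V}
    {L : List (RBPMove V)} (h : RBPReaches G r s L t) :
    t = sAt s L L.length ∧
      ∀ k (hk : k < L.length), RBPPre G r (sAt s L k) (L.get ⟨k, hk⟩) := by
  induction h with
  | nil s => exact ⟨rfl, fun k hk => absurd hk (by simp)⟩
  | @cons s t u mv L hstep hre ih =>
      obtain ⟨hpre, heq⟩ := RBPStep_iff.1 hstep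
      obtain ⟨ih1, ih2⟩ := ih
      constructor
      · rw [show (mv :: L).length = L.length + 1 from rfl, sAt_cons, ← heq]
        exact ih1
      · intro k hk
        match k with
        | 0 => exact hpre
        | k + 1 =>
            rw [sAt_cons, ← heq]
            exact ih2 k (by simpa using hk)

lemma computed_applyR (s : RBPState V) (mv : RBPMove V) :
    s.computed ⊆ (applyR s mv).computed := by
  cases mv <;> simp [applyR, Finset.subset_insert]

lemma computed_mono (s : RBPState V) (L : List (RBPMove V)) {a b : ℕ}
    (hab : a ≤ b) : (sAt s L a).computed ⊆ (sAt s L b).computed := by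
  induction b with
  | zero => simp_all
  | succ b ih =>
      rcases Nat.lt_or_ge b L.length with h | h
      · rcases Nat.lt_or_ge a (b+1) with h' | h'
        · refine subset_trans (ih (by omega)) ?_
          rw [sAt_succ s L b h]
          exact computed_applyR _ _
        · have : a = b + 1 := by omega
          subst this; exact subset_rfl
      · rcases Nat.lt_or_ge a (b+1) with h' | h'
        · rw [sAt_succ_of_ge s L b h]
          exact ih (by omega)
        · have : a = b + 1 := by omega
          subst this; exact subset_rfl

lemma red_applyR {s : RBPState V} {mv : RBPMove V} {v : V}
    (h : v ∈ (applyR s mv).red) :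
    v ∈ s.red ∨ mv = .load v ∨ mv = .compute v := by
  cases mv with
  | save w => exact Or.inl h
  | load w =>
      rcases Finset.mem_insert.1 h with rfl | h'
      · exact Or.inr (Or.inl rfl)
      · exact Or.inl h'
  | compute w =>
      rcases Finset.mem_insert.1 h with rfl | h'
      · exact Or.inr (Or.inr rfl)
      · exact Or.inl h'
  | delete w => exact Or.inl (Finset.mem_of_mem_erase h)

lemma blue_applyR {s : RBPState V} {mv : RBPMove V} {v : V}
    (h : v ∈ (applyR s mv).blue) : v ∈ s.blue ∨ mv = .save v := by
  cases mv with
  | save w =>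
      rcases Finset.mem_insert.1 h with rfl | h'
      · exact Or.inr rfl
      · exact Or.inl h'
  | load w => exact Or.inl h
  | compute w => exact Or.inl h
  | delete w => exact Or.inl h

lemma red_event (s : RBPState V) (L : List (RBPMove V)) {v : V} {a b : ℕ}
    (hab : a ≤ b) (hva : v ∉ (sAt s L a).red) (hvb : v ∈ (sAt s L b).red) :
    ∃ k, a ≤ k ∧ k < b ∧ ∃ hk : k < L.length,
      (L.get ⟨k, hk⟩ = .load v ∨ L.get ⟨k, hk⟩ = .compute v) := by
  induction b with
  | zero =>
      have : a = 0 := by omega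
      subst this; exact absurd hvb hva
  | succ b ih =>
      rcases Nat.eq_or_lt_of_le hab with rfl | hab'
      · exact absurd hvb hva
      · have hab2 : a ≤ b := by omega
        by_cases hvmid : v ∈ (sAt s L b).red
        · obtain ⟨k, h1, h2, h3⟩ := ih hab2 hvmid
          exact ⟨k, h1, by omega, h3⟩
        · rcases Nat.lt_or_ge b L.length with h | h
          · rw [sAt_succ s L b h] at hvb
            rcases red_applyR hvb with h' | h' | h'
            · exact absurd h' hvmid
            · exact ⟨b, hab2, by omega, h, Or.inl h'⟩
            · exact ⟨b, hab2, by omega, h, Or.inr h'⟩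
          · rw [sAt_succ_of_ge s L b h] at hvb
            exact absurd hvb hvmid

lemma blue_event (s : RBPState V) (L : List (RBPMove V)) {v : V} {a b : ℕ}
    (hab : a ≤ b) (hva : v ∉ (sAt s L a).blue) (hvb : v ∈ (sAt s L b).blue) :
    ∃ k, a ≤ k ∧ k < b ∧ ∃ hk : k < L.length, L.get ⟨k, hk⟩ = .save v := by
  induction b with
  | zero =>
      have : a = 0 := by omega
      subst this; exact absurd hvb hva
  | succ b ih =>
      rcases Nat.eq_or_lt_of_le hab with rfl | hab'
      · exact absurd hvb hva
      · have hab2 : a ≤ b := by omega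
        by_cases hvmid : v ∈ (sAt s L b).blue
        · obtain ⟨k, h1, h2, h3⟩ := ih hab2 hvmid
          exact ⟨k, h1, by omega, h3⟩
        · rcases Nat.lt_or_ge b L.length with h | h
          · rw [sAt_succ s L b h] at hvb
            rcases blue_applyR hvb with h' | h'
            · exact absurd h' hvmid
            · exact ⟨b, hab2, by omega, h, h'⟩
          · rw [sAt_succ_of_ge s L b h] at hvb
            exact absurd hvb hvmid

end RBPTrace
section RBPFirst

variable {V : Type} [Fintype V] [DecidableEq V] {G : DirGraph V} {r : ℕ}
  {L : List (RBPMove V)}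

lemma source_red_load
    (hpre : ∀ k (hk : k < L.length),
      RBPPre G r (sAt (RBPInit G) L k) (L.get ⟨k, hk⟩))
    {v : V} (hv : G.IsSource v) {b : ℕ} (hb : v ∈ (sAt (RBPInit G) L b).red) :
    ∃ k, k < b ∧ ∃ hk : k < L.length, L.get ⟨k, hk⟩ = .load v := by
  obtain ⟨k, _, h2, hk, hev⟩ := red_event (RBPInit G) L (Nat.zero_le b)
    (by simp [RBPInit]) hb
  rcases hev with hev | hev
  · exact ⟨k, h2, hk, hev⟩
  · have hp := hpre k hk
    rw [hev] at hp
    exact absurd hv hp.1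

lemma nonblue_red_compute
    (hpre : ∀ k (hk : k < L.length),
      RBPPre G r (sAt (RBPInit G) L k) (L.get ⟨k, hk⟩))
    {v : V} (hv0 : ¬ G.IsSource v) :
    ∀ b : ℕ, v ∈ (sAt (RBPInit G) L b).red →
    ∃ k, k < b ∧ ∃ hk : k < L.length, L.get ⟨k, hk⟩ = .compute v := by
  intro b
  induction b using Nat.strong_induction_on with
  | _ b ih =>
    intro hb
    obtain ⟨k, _, h2, hk, hev⟩ := red_event (RBPInit G) L (Nat.zero_le b)
      (by simp [RBPInit]) hb
    rcases hev with hev | hev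
    · have hp := hpre k hk
      rw [hev] at hp
      have hblue : v ∈ (sAt (RBPInit G) L k).blue := hp.1
      obtain ⟨k', _, hk'2, hk', hev'⟩ := blue_event (RBPInit G) L (Nat.zero_le k)
        (by simp [RBPInit, hv0]) hblue
      have hp' := hpre k' hk'
      rw [hev'] at hp'
      obtain ⟨k'', h1'', h2'', h3''⟩ := ih k' (by omega) hp'
      exact ⟨k'', by omega, h2'', h3''⟩
    · exact ⟨k, h2, hk, hev⟩

lemma compute_unique
    (hpre : ∀ k (hk : k < L.length),
      RBPPre G r (sAt (RBPInit G) L k) (L.get ⟨k, hk⟩))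
    {v : V} {k k' : ℕ} (hk : k < L.length) (hk' : k' < L.length)
    (h1 : L.get ⟨k, hk⟩ = .compute v) (h2 : L.get ⟨k', hk'⟩ = .compute v) :
    k = k' := by
  by_contra hne
  wlog hlt : k < k' generalizing k k'
  · exact this hk' hk h2 h1 (Ne.symm hne) (by omega)
  have hp' := hpre k' hk'
  rw [h2] at hp'
  have hcomp : v ∈ (sAt (RBPInit G) L (k + 1)).computed := by
    rw [sAt_succ _ _ _ hk, h1]
    simp [applyR]
  exact hp'.2.1 (computed_mono (RBPInit G) L (show k + 1 ≤ k' by omega) hcomp)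

end RBPFirst

namespace MatVecAux

lemma claim_extra {m r : ℕ} (hr₂ : r ≤ 2 * m) {L : List (RBPMove (MVNode m))}
    (hpre : ∀ k (hk : k < L.length),
      RBPPre (MVG m) r (sAt (RBPInit (MVG m)) L k) (L.get ⟨k, hk⟩))
    {a b : ℕ} {j j' : Fin m} (ha : a < L.length) (hb : b < L.length)
    (hab : a < b) (hjj : j ≠ j')
    (hLa : L.get ⟨a, ha⟩ = .compute (nY j))
    (hLb : L.get ⟨b, hb⟩ = .compute (nY j')) :
    ∃ ℓ, a < ℓ ∧ ℓ ≤ b ∧ ∃ hℓ : ℓ < L.length,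
      ((∃ jj ii, L.get ⟨ℓ, hℓ⟩ = .load (nP jj ii)) ∨
       (∃ i, L.get ⟨ℓ, hℓ⟩ = .load (nX i) ∧
         ∃ ℓ₀, ℓ₀ < ℓ ∧ ∃ h0 : ℓ₀ < L.length, L.get ⟨ℓ₀, h0⟩ = .load (nX i))) := by
  by_contra hcon
  set St := fun k => sAt (RBPInit (MVG m)) L k with hSt
  have hPa : ∀ i : Fin m, nP j i ∈ (St a).red := by
    intro i
    have hp := hpre a ha
    rw [hLa] at hp
    exact hp.2.2.1 _ ((E_into_Y _ j).2 ⟨i, rfl⟩)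
  have hRa1 : (St (a + 1)).red = insert (nY j) (St a).red := by
    show (sAt _ L (a+1)).red = _
    rw [sAt_succ _ _ _ ha, hLa]
    rfl
  have hcard : (St (a + 1)).red.card ≤ r := by
    have hp := hpre a ha
    rw [hLa] at hp
    rw [hRa1]
    exact hp.2.2.2
  have hXload : ∀ i : Fin m, ∃ ℓ₀, ℓ₀ < a ∧ ∃ h0 : ℓ₀ < L.length,
      L.get ⟨ℓ₀, h0⟩ = .load (nX i) := by
    intro i
    obtain ⟨e, he, hel, hev⟩ := nonblue_red_compute hpre
      (not_isSource_P j i) a (hPa i)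
    have hp := hpre e hel
    rw [hev] at hp
    have hx : nX i ∈ (St e).red := hp.2.2.1 _ ((E_into_P _ j i).2 (Or.inr rfl))
    obtain ⟨ℓ₀, hℓ₀, h0, hev0⟩ := source_red_load hpre (isSource_X i) hx
    exact ⟨ℓ₀, by omega, h0, hev0⟩
  have hwit : ∀ i : Fin m, nP j' i ∈ (St (a + 1)).red ∨
      nX i ∈ (St (a + 1)).red := by
    intro i
    by_cases h1 : nP j' i ∈ (St (a + 1)).red
    · exact Or.inl h1
    have hPb : nP j' i ∈ (St b).red := by
      have hp := hpre b hb
      rw [hLb] at hp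
      exact hp.2.2.1 _ ((E_into_Y _ j').2 ⟨i, rfl⟩)
    obtain ⟨k, hk1, hk2, hk3, hev⟩ := red_event (RBPInit (MVG m)) L
      (show a + 1 ≤ b by omega) h1 hPb
    rcases hev with hev | hev
    · exact (hcon ⟨k, by omega, by omega, hk3, Or.inl ⟨j', i, hev⟩⟩).elim
    · have hp := hpre k hk3
      rw [hev] at hp
      have hx : nX i ∈ (St k).red :=
        hp.2.2.1 _ ((E_into_P _ j' i).2 (Or.inr rfl))
      by_cases h2 : nX i ∈ (St (a + 1)).red
      · exact Or.inr h2
      obtain ⟨k', hk1', hk2', hk3', hev'⟩ := red_event (RBPInit (MVG m)) L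
        (show a + 1 ≤ k by omega) h2 hx
      rcases hev' with hev' | hev'
      · obtain ⟨ℓ₀, hℓ₀, h0, hev0⟩ := hXload i
        exact (hcon ⟨k', by omega, by omega, hk3',
          Or.inr ⟨i, hev', ℓ₀, by omega, h0, hev0⟩⟩).elim
      · have hp' := hpre k' hk3'
        rw [hev'] at hp'
        exact absurd (isSource_X i) hp'.1
  -- build the injective witness family
  set W : Fin m → MVNode m :=
    fun i => if nP j' i ∈ (St (a + 1)).red then nP j' i else nX i with hW
  have hWred : ∀ i, W i ∈ (St (a + 1)).red := by
    intro i
    by_cases h : nP j' i ∈ (St (a + 1)).red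
    · simp [hW, h]
    · rcases hwit i with h' | h'
      · exact absurd h' h
      · simpa [hW, h] using h'
  have hWinj : Function.Injective W := by
    intro x y hxy
    simp only [hW] at hxy
    split_ifs at hxy <;>
      simp [nP, nX, Prod.ext_iff] at hxy <;> tauto
  have hWrow : ∀ i, W i ∉ insert (nY j)
      (Finset.univ.image (fun i' => nP j i')) := by
    intro i
    simp only [Finset.mem_insert, Finset.mem_image, not_or, not_exists]
    constructor
    · by_cases h : nP j' i ∈ (St (a + 1)).red <;> simp [hW, h, nP, nX, nY]
    · intro i'
      have hjj' : j' ≠ j := Ne.symm hjj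
      by_cases h : nP j' i ∈ (St (a + 1)).red <;>
        simp [hW, h, nP, nX, nY, Prod.ext_iff, hjj'] <;>
        try exact fun h'' => absurd h''.symm hjj'
  set Row : Finset (MVNode m) :=
    insert (nY j) (Finset.univ.image (fun i' => nP j i')) with hRow
  have hRowsub : Row ⊆ (St (a + 1)).red := by
    intro v hv
    rcases Finset.mem_insert.1 hv with rfl | hv'
    · rw [hRa1]; exact Finset.mem_insert_self _ _
    · obtain ⟨i', _, rfl⟩ := Finset.mem_image.1 hv'
      rw [hRa1]; exact Finset.mem_insert_of_mem (hPa i')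
  have hWsub : Finset.univ.image W ⊆ (St (a + 1)).red := by
    intro v hv
    obtain ⟨i, _, rfl⟩ := Finset.mem_image.1 hv
    exact hWred i
  have hdisj : Disjoint Row (Finset.univ.image W) := by
    rw [Finset.disjoint_right]
    intro v hv
    obtain ⟨i, _, rfl⟩ := Finset.mem_image.1 hv
    exact hWrow i
  have hRowcard : Row.card = m + 1 := by
    rw [hRow, Finset.card_insert_of_notMem (by
      simp only [Finset.mem_image, not_exists]
      intro i' 
      simp [nP, nY])]
    rw [Finset.card_image_of_injective _ (fun x y h => by
      simpa [nP, Prod.ext_iff] using h)]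
    simp
  have hWcard : (Finset.univ.image W).card = m := by
    rw [Finset.card_image_of_injective _ hWinj]; simp
  have hcard2 : (Row ∪ Finset.univ.image W).card ≤ (St (a + 1)).red.card :=
    Finset.card_le_card (Finset.union_subset hRowsub hWsub)
  rw [Finset.card_union_of_disjoint hdisj, hRowcard, hWcard] at hcard2
  omega

end MatVecAux
namespace MatVecAux

lemma rbp_cost_lower {m r : ℕ} (hm : 3 ≤ m) (hr₂ : r ≤ 2 * m)
    (L : List (RBPMove (MVNode m))) (hL : RBPValid (MVG m) r L) :
    m ^ 2 + 3 * m - 1 ≤ RBPCost L := by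
  classical
  obtain ⟨t, hreach, hsinks⟩ := hL
  obtain ⟨ht, hpre⟩ := RBPReaches_spec hreach
  have getcongr : ∀ {p q : ℕ} (hp : p < L.length) (hq : q < L.length),
      p = q → L.get ⟨p, hp⟩ = L.get ⟨q, hq⟩ := by
    intro p q hp hq h; subst h; rfl
  -- save positions for the sinks
  have hYsave : ∀ j : Fin m, ∃ g, ∃ hg : g < L.length,
      L.get ⟨g, hg⟩ = .save (nY j) := by
    intro j
    have hblue : nY j ∈ (sAt (RBPInit (MVG m)) L L.length).blue := by
      rw [← ht]; exact hsinks _ (isSink_Y j)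
    obtain ⟨k, _, hk2, hk, hev⟩ := blue_event (RBPInit (MVG m)) L (Nat.zero_le _)
      (by simp [RBPInit, not_isSource_Y j]) hblue
    exact ⟨k, hk, hev⟩
  choose gy gylt gyev using hYsave
  -- compute positions for the sinks
  have hYcomp : ∀ j : Fin m, ∃ c, ∃ hc : c < L.length,
      L.get ⟨c, hc⟩ = .compute (nY j) := by
    intro j
    have hp := hpre (gy j) (gylt j)
    rw [gyev j] at hp
    obtain ⟨c, _, hc, hev⟩ := nonblue_red_compute hpre (not_isSource_Y j)
      (gy j) hp
    exact ⟨c, hc, hev⟩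
  choose cy cylt cyev using hYcomp
  have cyinj : Function.Injective cy := by
    intro x y hxy
    have h3 : L.get ⟨cy x, cylt x⟩ = L.get ⟨cy y, cylt y⟩ :=
      getcongr _ _ hxy
    rw [cyev x, cyev y] at h3
    simpa [nY] using h3
  -- load positions for matrix entries
  have hPA : ∀ ji : Fin m × Fin m, ∃ p, ∃ hp : p < L.length,
      L.get ⟨p, hp⟩ = .load (nA ji.1 ji.2) := by
    rintro ⟨j, i⟩
    have hp := hpre (cy j) (cylt j)
    rw [cyev j] at hp
    have hPred : nP j i ∈ (sAt (RBPInit (MVG m)) L (cy j)).red :=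
      hp.2.2.1 _ ((E_into_Y _ j).2 ⟨i, rfl⟩)
    obtain ⟨e', _, hel, hev⟩ := nonblue_red_compute hpre (not_isSource_P j i)
      _ hPred
    have hpe := hpre e' hel
    rw [hev] at hpe
    have hared : nA j i ∈ (sAt (RBPInit (MVG m)) L e').red :=
      hpe.2.2.1 _ ((E_into_P _ j i).2 (Or.inl rfl))
    obtain ⟨p, _, hpl, hpev⟩ := source_red_load hpre (isSource_A j i) hared
    exact ⟨p, hpl, hpev⟩
  choose fA fAlt fAev using hPA
  -- load positions for vector entries
  have hXl : ∀ i : Fin m, ∃ p : ℕ, ∃ hp : p < L.length,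
      L.get ⟨p, hp⟩ = .load (nX i) := by
    intro i
    have hp := hpre (cy i) (cylt i)
    rw [cyev i] at hp
    have hPred : nP i i ∈ (sAt (RBPInit (MVG m)) L (cy i)).red :=
      hp.2.2.1 _ ((E_into_Y _ i).2 ⟨i, rfl⟩)
    obtain ⟨e', _, hel, hev⟩ := nonblue_red_compute hpre (not_isSource_P i i)
      _ hPred
    have hpe := hpre e' hel
    rw [hev] at hpe
    have hx : nX i ∈ (sAt (RBPInit (MVG m)) L e').red :=
      hpe.2.2.1 _ ((E_into_P _ i i).2 (Or.inr rfl))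
    obtain ⟨p, _, hpl, hpev⟩ := source_red_load hpre (isSource_X i) hx
    exact ⟨p, hpl, hpev⟩
  set fx : Fin m → ℕ := fun i => Nat.find (hXl i) with hfx
  have fxspec : ∀ i, ∃ hp : fx i < L.length,
      L.get ⟨fx i, hp⟩ = .load (nX i) := fun i => Nat.find_spec (hXl i)
  have fxmin : ∀ i p, (∃ hp : p < L.length, L.get ⟨p, hp⟩ = .load (nX i)) →
      fx i ≤ p := fun i p h => Nat.find_min' (hXl i) h
  choose fxlt fxev using fxspec
  -- sorted compute times
  set T : Finset ℕ := Finset.univ.image cy with hT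
  have hTcard : T.card = m := by
    rw [hT, Finset.card_image_of_injective _ cyinj]; simp
  set e : Fin m ≃o {x // x ∈ T} := T.orderIsoOfFin hTcard with he
  have hTmem : ∀ k : Fin m, ∃ j : Fin m, cy j = (e k : ℕ) := by
    intro k
    obtain ⟨j, _, hj⟩ := Finset.mem_image.1 (e k).2
    exact ⟨j, hj⟩
  have emono : ∀ k k' : Fin m, k < k' → (e k : ℕ) < (e k' : ℕ) := by
    intro k k' hk
    exact Subtype.coe_lt_coe.2 (e.strictMono hk)
  have emono' : ∀ k k' : Fin m, k ≤ k' → (e k : ℕ) ≤ (e k' : ℕ) := by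
    intro k k' hk
    exact Subtype.coe_le_coe.2 (e.monotone hk)
  have hclaim : ∀ k : Fin (m - 1), ∃ ℓ,
      (e ⟨(k : ℕ), by have := k.isLt; omega⟩ : ℕ) < ℓ ∧
      ℓ ≤ (e ⟨(k : ℕ) + 1, by have := k.isLt; omega⟩ : ℕ) ∧
      ∃ hℓ : ℓ < L.length,
      ((∃ jj ii, L.get ⟨ℓ, hℓ⟩ = .load (nP jj ii)) ∨
       (∃ i, L.get ⟨ℓ, hℓ⟩ = .load (nX i) ∧
         ∃ ℓ₀, ℓ₀ < ℓ ∧ ∃ h0 : ℓ₀ < L.length,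
           L.get ⟨ℓ₀, h0⟩ = .load (nX i))) := by
    intro k
    obtain ⟨j, hj⟩ := hTmem ⟨(k : ℕ), by have := k.isLt; omega⟩
    obtain ⟨j', hj'⟩ := hTmem ⟨(k : ℕ) + 1, by have := k.isLt; omega⟩
    have hlt : (e ⟨(k : ℕ), by have := k.isLt; omega⟩ : ℕ) <
        (e ⟨(k : ℕ) + 1, by have := k.isLt; omega⟩ : ℕ) := by
      refine emono _ _ ?_
      simp [Fin.mk_lt_mk]
    have hab : cy j < cy j' := by rw [hj, hj']; exact hlt
    have hjj : j ≠ j' := by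
      rintro rfl
      omega
    obtain ⟨ℓ, h1, h2, h3⟩ := claim_extra hr₂ hpre (cylt j) (cylt j') hab hjj
      (cyev j) (cyev j')
    exact ⟨ℓ, by rw [← hj]; exact h1, by rw [← hj']; exact h2, h3⟩
  choose ell ell1 ell2 ell3 using hclaim
  -- the four position sets
  set PA : Finset ℕ := Finset.univ.image fA with hPAdef
  set PX : Finset ℕ := Finset.univ.image fx with hPXdef
  set PY : Finset ℕ := Finset.univ.image gy with hPYdef
  set PE : Finset ℕ := Finset.univ.image ell with hPEdef
  have fAinj : Function.Injective fA := by
    intro x y h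
    have h3 := getcongr (fAlt x) (fAlt y) h
    rw [fAev x, fAev y] at h3
    simp only [RBPMove.load.injEq, nA, Sum.inl.injEq, Prod.mk.injEq] at h3
    exact Prod.ext h3.1 h3.2
  have fxinj : Function.Injective fx := by
    intro x y h
    have h3 := getcongr (fxlt x) (fxlt y) h
    rw [fxev x, fxev y] at h3
    simpa [nX] using h3
  have gyinj : Function.Injective gy := by
    intro x y h
    have h3 := getcongr (gylt x) (gylt y) h
    rw [gyev x, gyev y] at h3
    simpa [nY] using h3
  have ellinj : Function.Injective ell := by
    have hmono : ∀ k k' : Fin (m - 1), k < k' → ell k < ell k' := by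
      intro k k' hk
      have h1 : ell k ≤ (e ⟨(k : ℕ) + 1, by have := k.isLt; omega⟩ : ℕ) :=
        ell2 k
      have h2 : (e ⟨(k : ℕ) + 1, by have := k.isLt; omega⟩ : ℕ) ≤
          (e ⟨(k' : ℕ), by have := k'.isLt; omega⟩ : ℕ) := by
        refine emono' _ _ ?_
        have : (k : ℕ) < (k' : ℕ) := hk
        simp [Fin.mk_le_mk]
        omega
      have h3 := ell1 k'
      omega
    intro x y h
    rcases lt_trichotomy x y with hlt | heq | hlt
    · exact absurd h (Nat.ne_of_lt (hmono _ _ hlt))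
    · exact heq
    · exact absurd h.symm (Nat.ne_of_lt (hmono _ _ hlt))
  have hPAcard : PA.card = m ^ 2 := by
    rw [hPAdef, Finset.card_image_of_injective _ fAinj]
    simp [sq]
  have hPXcard : PX.card = m := by
    rw [hPXdef, Finset.card_image_of_injective _ fxinj]; simp
  have hPYcard : PY.card = m := by
    rw [hPYdef, Finset.card_image_of_injective _ gyinj]; simp
  have hPEcard : PE.card = m - 1 := by
    rw [hPEdef, Finset.card_image_of_injective _ ellinj]; simp
  -- disjointness
  have d1 : Disjoint PA PX := by
    rw [Finset.disjoint_left]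
    rintro p hp hq
    obtain ⟨ji, _, rfl⟩ := Finset.mem_image.1 hp
    obtain ⟨i, _, hip⟩ := Finset.mem_image.1 hq
    have h3 := getcongr (fxlt i) (fAlt ji) hip
    rw [fxev i, fAev ji] at h3
    simp [nA, nX] at h3
  have d2 : Disjoint (PA ∪ PX) PY := by
    rw [Finset.disjoint_left]
    rintro p hp hq
    obtain ⟨j, _, hjp⟩ := Finset.mem_image.1 hq
    rcases Finset.mem_union.1 hp with hp' | hp'
    · obtain ⟨ji, _, rfl⟩ := Finset.mem_image.1 hp'
      have h3 := getcongr (gylt j) (fAlt ji) hjp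
      rw [gyev j, fAev ji] at h3
      simp at h3
    · obtain ⟨i, _, rfl⟩ := Finset.mem_image.1 hp'
      have h3 := getcongr (gylt j) (fxlt i) hjp
      rw [gyev j, fxev i] at h3
      simp at h3
  have d3 : Disjoint (PA ∪ PX ∪ PY) PE := by
    rw [Finset.disjoint_left]
    rintro p hp hq
    obtain ⟨k, _, rfl⟩ := Finset.mem_image.1 hq
    obtain ⟨hkl, hkev⟩ := ell3 k
    rcases Finset.mem_union.1 hp with hp' | hp'
    · rcases Finset.mem_union.1 hp' with hp'' | hp''
      · obtain ⟨ji, _, hjip⟩ := Finset.mem_image.1 hp''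
        rcases hkev with ⟨jj, ii, hev⟩ | ⟨i, hev, _⟩ <;>
        · have h3 := getcongr (fAlt ji) hkl hjip
          rw [fAev ji, hev] at h3
          simp [nA, nP, nX] at h3
      · obtain ⟨i', _, hip⟩ := Finset.mem_image.1 hp''
        rcases hkev with ⟨jj, ii, hev⟩ | ⟨i, hev, ℓ₀, hℓ₀, h0, hev0⟩
        · have h3 := getcongr (fxlt i') hkl hip
          rw [fxev i', hev] at h3
          simp [nX, nP] at h3
        · have h3 := getcongr (fxlt i') hkl hip
          rw [fxev i', hev] at h3
          have : i' = i := by simpa [nX] using h3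
          subst this
          have h4 : fx i' ≤ ℓ₀ := fxmin i' ℓ₀ ⟨h0, hev0⟩
          omega
    · obtain ⟨j, _, hjp⟩ := Finset.mem_image.1 hp'
      rcases hkev with ⟨jj, ii, hev⟩ | ⟨i, hev, _⟩ <;>
      · have h3 := getcongr (gylt j) hkl hjp
        rw [gyev j, hev] at h3
        simp at h3
  -- total cardinality
  have hcard : (PA ∪ PX ∪ PY ∪ PE).card = m ^ 2 + m + m + (m - 1) := by
    rw [Finset.card_union_of_disjoint d3, Finset.card_union_of_disjoint d2,
      Finset.card_union_of_disjoint d1, hPAcard, hPXcard, hPYcard, hPEcard]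
  -- all positions are cost-1 moves
  have hprop : ∀ p ∈ PA ∪ PX ∪ PY ∪ PE, ∃ h : p < L.length,
      RBPMove.ioCost (L.get ⟨p, h⟩) = 1 := by
    intro p hp
    rcases Finset.mem_union.1 hp with hp' | hp'
    · rcases Finset.mem_union.1 hp' with hp'' | hp''
      · rcases Finset.mem_union.1 hp'' with hp3 | hp3
        · obtain ⟨ji, _, rfl⟩ := Finset.mem_image.1 hp3
          exact ⟨fAlt ji, by rw [fAev ji]; rfl⟩
        · obtain ⟨i, _, rfl⟩ := Finset.mem_image.1 hp3
          exact ⟨fxlt i, by rw [fxev i]; rfl⟩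
      · obtain ⟨j, _, rfl⟩ := Finset.mem_image.1 hp''
        exact ⟨gylt j, by rw [gyev j]; rfl⟩
    · obtain ⟨k, _, rfl⟩ := Finset.mem_image.1 hp'
      obtain ⟨hkl, hkev⟩ := ell3 k
      rcases hkev with ⟨jj, ii, hev⟩ | ⟨i, hev, _⟩ <;>
        exact ⟨hkl, by rw [hev]; rfl⟩
  have hfinal := card_le_sum_map L RBPMove.ioCost (PA ∪ PX ∪ PY ∪ PE) hprop
  rw [hcard] at hfinal
  have : (L.map RBPMove.ioCost).sum = RBPCost L := rfl
  rw [this] at hfinal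
  have hq : 0 < m ^ 2 := by positivity
  omega

end MatVecAux
/-- for `m ≥ 3` and `m + 3 ≤ r ≤ 2m`, the matrix-vector
multiplication DAG has `OPT_PRBP = m² + 2m` (the trivial cost) while
`OPT_RBP ≥ m² + 3m − 1`; in particular `OPT_PRBP < OPT_RBP`. -/
theorem matvec_costs (m r : ℕ) (hm : 3 ≤ m) (hr₁ : m + 3 ≤ r) (hr₂ : r ≤ 2 * m) :
    optPRBP (MVG m) r = ((m ^ 2 + 2 * m : ℕ) : ℕ∞) ∧
    ((m ^ 2 + 3 * m - 1 : ℕ) : ℕ∞) ≤ optRBP (MVG m) r ∧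
    optPRBP (MVG m) r < optRBP (MVG m) r := by
  have hm1 : 1 ≤ m := by omega
  have h1 : optPRBP (MVG m) r = ((m ^ 2 + 2 * m : ℕ) : ℕ∞) :=
    MatVecAux.optPRBP_eq hm1 hr₁
  have h2 : ((m ^ 2 + 3 * m - 1 : ℕ) : ℕ∞) ≤ optRBP (MVG m) r := by
    refine le_sInf ?_
    rintro x ⟨L, hL, rfl⟩
    exact Nat.cast_le.2 (MatVecAux.rbp_cost_lower hm hr₂ L hL)
  refine ⟨h1, h2, ?_⟩
  rw [h1]
  refine lt_of_lt_of_le ?_ h2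
  exact_mod_cast (by omega : m ^ 2 + 2 * m < m ^ 2 + 3 * m - 1)
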